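/- Let Λ be a measure on (0,∞) with Λ([x,∞)) < ∞ for every x > 0, and define Λ⁻¹(u) = inf{x > 0 : Λ([x,∞)) < u} for u > 0. Then for every x > 0, the Lebesgue measure of the set {u ∈ (0,∞) : Λ⁻¹(u) ≥ x} equals Λ([x,∞)). Consequently, for every measurable g : (0,∞) → [0,∞], one has ∫_{{u>0 : Λ⁻¹(u) > 0}} g(Λ⁻¹(u)) du = ∫_{(0,∞)} g(x) dΛ(x). -/

import Mathlib

open MeasureTheory Set

noncomputable def levyTailInv (Λ : Measure ℝ) (u : ℝ) : ℝ :=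
  sInf {x : ℝ | 0 < x ∧ Λ (Set.Ici x) < ENNReal.ofReal u}

lemma exists_tail_lt (Λ : Measure ℝ) (htail : ∀ x : ℝ, 0 < x → Λ (Set.Ici x) < ⊤)
    {ε : ENNReal} (hε : 0 < ε) : ∃ y : ℝ, 0 < y ∧ Λ (Set.Ici y) < ε := by
  have hanti : Antitone (fun n : ℕ => Set.Ici ((n : ℝ) + 1)) := by
    intro m n hmn
    exact Set.Ici_subset_Ici.2 (by exact_mod_cast add_le_add_left (Nat.cast_le.2 hmn) 1)
  have hinter : ⋂ n : ℕ, Set.Ici ((n : ℝ) + 1) = ∅ := by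
    ext z
    simp only [Set.mem_iInter, Set.mem_Ici, Set.mem_empty_iff_false, iff_false]
    push_neg
    obtain ⟨n, hn⟩ := exists_nat_gt z
    exact ⟨n, by linarith⟩
  have ht := MeasureTheory.tendsto_measure_iInter_atTop (μ := Λ)
    (fun n => measurableSet_Ici.nullMeasurableSet) hanti
    ⟨0, by simpa using (htail 1 one_pos).ne⟩
  rw [hinter, measure_empty] at ht
  obtain ⟨n, hn⟩ := (ht.eventually_lt_const hε).exists
  exact ⟨(n : ℝ) + 1, by positivity, hn⟩

lemma exists_tail_lt_of_lt (Λ : Measure ℝ) (htail : ∀ x : ℝ, 0 < x → Λ (Set.Ici x) < ⊤)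
    {x : ℝ} (hx : 0 < x) {ε : ENNReal} (hlt : Λ (Set.Ici x) < ε) :
    ∃ y : ℝ, 0 < y ∧ y < x ∧ Λ (Set.Ici y) < ε := by
  set y : ℕ → ℝ := fun n => x - x / (n + 2) with hy
  have hy_pos : ∀ n, 0 < y n := by
    intro n
    have h1 : x / (n + 2) < x := by
      rw [div_lt_iff₀ (by positivity)]
      nlinarith [Nat.cast_nonneg (α := ℝ) n]
    simpa [hy] using sub_pos.2 h1
  have hy_lt : ∀ n, y n < x := by
    intro n
    have : 0 < x / ((n : ℝ) + 2) := by positivity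
    simp [hy]; linarith
  have hanti : Antitone (fun n : ℕ => Set.Ici (y n)) := by
    intro m n hmn
    apply Set.Ici_subset_Ici.2
    have : x / ((n : ℝ) + 2) ≤ x / ((m : ℝ) + 2) := by
      apply div_le_div_of_nonneg_left hx.le (by positivity)
      exact_mod_cast add_le_add_left (Nat.cast_le.2 hmn) 2
    simp [hy]; linarith
  have hinter : ⋂ n : ℕ, Set.Ici (y n) = Set.Ici x := by
    ext z
    simp only [Set.mem_iInter, Set.mem_Ici]
    constructor
    · intro h
      by_contra hzx
      push_neg at hzx
      obtain ⟨n, hn⟩ := exists_nat_gt (x / (x - z))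
      have hxz : 0 < x - z := by linarith
      have hn2 : x / (x - z) < (n : ℝ) + 2 := by linarith [Nat.cast_nonneg (α := ℝ) n]
      have : x / ((n : ℝ) + 2) < x - z := by
        rw [div_lt_iff₀ (by positivity)]
        calc x = x / (x - z) * (x - z) := by field_simp
        _ < ((n:ℝ)+2) * (x - z) := by exact mul_lt_mul_of_pos_right hn2 hxz
        _ = (x - z) * ((n:ℝ)+2) := by ring
      have := h n
      simp [hy] at this
      linarith
    · intro h n
      exact le_trans (hy_lt n).le h
  have ht := MeasureTheory.tendsto_measure_iInter_atTop (μ := Λ)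
    (fun n => measurableSet_Ici.nullMeasurableSet) hanti
    ⟨0, (htail (y 0) (hy_pos 0)).ne⟩
  rw [hinter] at ht
  obtain ⟨n, hn⟩ := (ht.eventually_lt_const hlt).exists
  exact ⟨y n, hy_pos n, hy_lt n, hn⟩

lemma levyTailInv_ge_iff (Λ : Measure ℝ) (htail : ∀ x : ℝ, 0 < x → Λ (Set.Ici x) < ⊤)
    {x u : ℝ} (hx : 0 < x) (hu : 0 < u) :
    x ≤ levyTailInv Λ u ↔ ENNReal.ofReal u ≤ Λ (Set.Ici x) := by
  set S := {y : ℝ | 0 < y ∧ Λ (Set.Ici y) < ENNReal.ofReal u} with hS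
  have hSne : S.Nonempty := by
    obtain ⟨y, hy1, hy2⟩ := exists_tail_lt Λ htail (ε := ENNReal.ofReal u) (by simpa using hu)
    exact ⟨y, hy1, hy2⟩
  constructor
  · intro h
    by_contra hlt
    push_neg at hlt
    obtain ⟨y, hy0, hyx, hyu⟩ := exists_tail_lt_of_lt Λ htail hx hlt
    have : levyTailInv Λ u ≤ y := csInf_le ⟨0, fun z hz => hz.1.le⟩ ⟨hy0, hyu⟩
    linarith
  · intro h
    apply le_csInf hSne
    intro y hy
    by_contra hxy
    push_neg at hxy
    have : Λ (Set.Ici x) ≤ Λ (Set.Ici y) := measure_mono (Set.Ici_subset_Ici.2 hxy.le)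
    exact absurd (lt_of_le_of_lt (h.trans this) hy.2) (lt_irrefl _)

lemma levyTailInv_nonneg (Λ : Measure ℝ) (u : ℝ) : 0 ≤ levyTailInv Λ u := by
  rcases Set.eq_empty_or_nonempty {x : ℝ | 0 < x ∧ Λ (Set.Ici x) < ENNReal.ofReal u} with h | h
  · simp [levyTailInv, h]
  · exact le_csInf h fun y hy => hy.1.le

lemma levyTailInv_set_eq (Λ : Measure ℝ) (htail : ∀ x : ℝ, 0 < x → Λ (Set.Ici x) < ⊤)
    {x : ℝ} (hx : 0 < x) :
    {u : ℝ | 0 < u ∧ x ≤ levyTailInv Λ u} = Set.Ioc 0 ((Λ (Set.Ici x)).toReal) := by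
  ext u
  simp only [Set.mem_setOf_eq, Set.mem_Ioc]
  constructor
  · rintro ⟨hu, h⟩
    refine ⟨hu, ?_⟩
    have := (levyTailInv_ge_iff Λ htail hx hu).1 h
    exact (ENNReal.ofReal_le_iff_le_toReal (htail x hx).ne).1 this
  · rintro ⟨hu, h⟩
    exact ⟨hu, (levyTailInv_ge_iff Λ htail hx hu).2
      ((ENNReal.ofReal_le_iff_le_toReal (htail x hx).ne).2 h)⟩

lemma levyTailInv_claim1 (Λ : Measure ℝ) (htail : ∀ x : ℝ, 0 < x → Λ (Set.Ici x) < ⊤)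
    {x : ℝ} (hx : 0 < x) :
    volume {u : ℝ | 0 < u ∧ x ≤ levyTailInv Λ u} = Λ (Set.Ici x) := by
  rw [levyTailInv_set_eq Λ htail hx, Real.volume_Ioc]
  simp [ENNReal.ofReal_toReal (htail x hx).ne]

lemma levyTailInv_measurable (Λ : Measure ℝ) (htail : ∀ x : ℝ, 0 < x → Λ (Set.Ici x) < ⊤) :
    Measurable (levyTailInv Λ) := by
  apply measurable_of_Ici
  intro x
  rcases le_or_gt x 0 with hx | hx
  · have : levyTailInv Λ ⁻¹' Set.Ici x = Set.univ := by
      ext u; simp [Set.mem_Ici, le_trans hx (levyTailInv_nonneg Λ u)]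
    rw [this]; exact MeasurableSet.univ
  · have : levyTailInv Λ ⁻¹' Set.Ici x = {u : ℝ | 0 < u ∧ x ≤ levyTailInv Λ u} := by
      ext u
      simp only [Set.mem_preimage, Set.mem_Ici, Set.mem_setOf_eq]
      constructor
      · intro h
        refine ⟨?_, h⟩
        by_contra hu
        push_neg at hu
        have hempty : {y : ℝ | 0 < y ∧ Λ (Set.Ici y) < ENNReal.ofReal u} = ∅ := by
          ext y
          simp only [Set.mem_setOf_eq, Set.mem_empty_iff_false, iff_false, not_and]
          intro hy
          simp [ENNReal.ofReal_eq_zero.2 hu]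
        rw [levyTailInv, hempty] at h
        simp [Real.sInf_empty] at h
        linarith
      · exact fun h => h.2
    rw [this, levyTailInv_set_eq Λ htail hx]
    exact measurableSet_Ioc
theorem levyTailInv_measure_preimage_and_change_of_variables
    (Λ : Measure ℝ) (hsupp : Λ (Set.Iic 0) = 0)
    (htail : ∀ x : ℝ, 0 < x → Λ (Set.Ici x) < ⊤) :
    (∀ x : ℝ, 0 < x →
        volume {u : ℝ | 0 < u ∧ x ≤ levyTailInv Λ u} = Λ (Set.Ici x)) ∧
      (∀ g : ℝ → ENNReal, Measurable g →
        ∫⁻ u in {u : ℝ | 0 < u ∧ 0 < levyTailInv Λ u}, g (levyTailInv Λ u)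
          = ∫⁻ x in Set.Ioi (0:ℝ), g x ∂Λ) := by
  refine ⟨fun x hx => levyTailInv_claim1 Λ htail hx, fun g hg => ?_⟩
  set f := levyTailInv Λ with hf_def
  have hf : Measurable f := levyTailInv_measurable Λ htail
  set A : Set ℝ := {u : ℝ | 0 < u ∧ 0 < f u} with hA_def
  have hA : MeasurableSet A := by
    have : A = Set.Ioi 0 ∩ f ⁻¹' Set.Ioi 0 := by
      ext u; simp [hA_def, Set.mem_Ioi, and_comm]
    rw [this]
    exact measurableSet_Ioi.inter (hf measurableSet_Ioi)
  set μ := Measure.map f (volume.restrict A) with hμ_def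
  set ν := Λ.restrict (Set.Ioi 0) with hν_def
  have hμIci : ∀ b : ℝ, 0 < b → μ (Set.Ici b) = Λ (Set.Ici b) := by
    intro b hb
    rw [hμ_def, Measure.map_apply hf measurableSet_Ici, Measure.restrict_apply' hA]
    have heq : f ⁻¹' Set.Ici b ∩ A = {u : ℝ | 0 < u ∧ b ≤ f u} := by
      ext u
      constructor
      · rintro ⟨h1, h2, h3⟩; exact ⟨h2, h1⟩
      · rintro ⟨h1, h2⟩; exact ⟨h2, h1, lt_of_lt_of_le hb h2⟩
    rw [heq]
    exact levyTailInv_claim1 Λ htail hb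
  have hνIci : ∀ b : ℝ, 0 < b → ν (Set.Ici b) = Λ (Set.Ici b) := by
    intro b hb
    rw [hν_def, Measure.restrict_apply measurableSet_Ici]
    congr 1
    rw [Set.inter_eq_left]
    exact fun z hz => lt_of_lt_of_le hb hz
  have hrestr : ∀ c : ℝ, 0 < c → μ.restrict (Set.Ici c) = ν.restrict (Set.Ici c) := by
    intro c hc
    have hfin : IsFiniteMeasure (μ.restrict (Set.Ici c)) := by
      constructor
      rw [Measure.restrict_apply_univ, hμIci c hc]
      exact htail c hc
    refine Measure.ext_of_Ici _ _ (fun a => ?_)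
    rw [Measure.restrict_apply measurableSet_Ici, Measure.restrict_apply measurableSet_Ici,
      Set.Ici_inter_Ici]
    have hac : 0 < a ⊔ c := lt_sup_of_lt_right hc
    rw [hμIci _ hac, hνIci _ hac]
  have hμν : μ = ν := by
    have hμ0 : μ (Set.Iic 0) = 0 := by
      rw [hμ_def, Measure.map_apply hf measurableSet_Iic, Measure.restrict_apply' hA]
      convert measure_empty (μ := volume)
      ext u
      simp only [Set.mem_inter_iff, Set.mem_preimage, Set.mem_Iic, hA_def, Set.mem_setOf_eq,
        Set.mem_empty_iff_false, iff_false]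
      rintro ⟨h1, h2, h3⟩
      linarith
    have hν0 : ν (Set.Iic 0) = 0 := by
      rw [hν_def, Measure.restrict_apply measurableSet_Iic]
      convert measure_empty (μ := Λ)
      ext u; simp only [Set.mem_inter_iff, Set.mem_Iic, Set.mem_Ioi,
        Set.mem_empty_iff_false, iff_false, not_and]
      intro h1; linarith
    have key : ∀ (ρ : Measure ℝ), ρ (Set.Iic 0) = 0 →
        (∀ s : Set ℝ, MeasurableSet s →
          ρ s = ⨆ n : ℕ, ρ.restrict (Set.Ici (1 / ((n : ℝ) + 1))) s) := by
      intro ρ hρ0 s hs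
      have hsplit := measure_inter_add_diff (μ := ρ) s (measurableSet_Ioi (a := (0:ℝ)))
      have hdiff : ρ (s \ Set.Ioi 0) = 0 := by
        refine measure_mono_null ?_ hρ0
        intro u hu
        simp only [Set.mem_diff, Set.mem_Ioi, not_lt] at hu
        exact hu.2
      have h1 : ρ s = ρ (s ∩ Set.Ioi 0) := by
        rw [← hsplit, hdiff, add_zero]
      have hUnion : s ∩ Set.Ioi 0 = ⋃ n : ℕ, s ∩ Set.Ici (1 / ((n : ℝ) + 1)) := by
        ext u
        simp only [Set.mem_inter_iff, Set.mem_Ioi, Set.mem_iUnion, Set.mem_Ici]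
        constructor
        · rintro ⟨hus, hu⟩
          obtain ⟨n, hn⟩ := exists_nat_gt (1 / u)
          refine ⟨n, hus, ?_⟩
          rw [div_le_iff₀ (by positivity)]
          have h1u : 1 / u < (n : ℝ) + 1 := by linarith [Nat.cast_nonneg (α := ℝ) n]
          calc (1 : ℝ) = 1 / u * u := by field_simp
          _ ≤ ((n : ℝ) + 1) * u := by
              exact mul_le_mul_of_nonneg_right h1u.le hu.le
          _ = u * ((n : ℝ) + 1) := by ring
        · rintro ⟨n, hus, hn⟩
          refine ⟨hus, lt_of_lt_of_le (by positivity) hn⟩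
      have hmono : Monotone (fun n : ℕ => s ∩ Set.Ici (1 / ((n : ℝ) + 1))) := by
        intro m n hmn
        apply Set.inter_subset_inter_right
        apply Set.Ici_subset_Ici.2
        apply div_le_div_of_nonneg_left one_pos.le (by positivity)
        exact_mod_cast add_le_add_left (Nat.cast_le.2 hmn) 1
      rw [h1, hUnion, hmono.directed_le.measure_iUnion]
      congr 1
      ext n
      rw [Measure.restrict_apply hs]
    ext s hs
    rw [key μ hμ0 s hs, key ν hν0 s hs]
    congr 1
    ext n
    rw [hrestr (1 / ((n : ℝ) + 1)) (by positivity)]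
  calc ∫⁻ u in A, g (f u) = ∫⁻ x, g x ∂μ := (lintegral_map hg hf).symm
  _ = ∫⁻ x in Set.Ioi (0 : ℝ), g x ∂Λ := by rw [hμν]
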